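/- Let Z be a real Hilbert space, X ⊆ Z a linear subspace, U a real vector space, and let A : X → Z, B₂ : U → Z, Zc : X → U be linear maps, B₁ ∈ L(ℝ^m, Z) linear, C : X → ℝ^q linear, D₁ ∈ ℝ^{q×m}, D₂ : U → ℝ^q linear, and γ > 0. Suppose P : Z → Z is a bounded linear operator that is self-adjoint, coercive, maps X into X with P(X) = X (so that P is bijective with bounded inverse P⁻¹ and P⁻¹ maps X into X), and suppose there exists ε > 0 such that for all z ∈ X, w ∈ ℝ^m, v ∈ ℝ^q: 2⟨z, A(Pz)⟩ + 2⟨z, B₂(Zc z)⟩ + 2⟨z, B₁w⟩ ≤ γ wᵀw − 2vᵀ(C(Pz) + D₂(Zc z) + D₁w) + γ vᵀv − ε‖z‖². Then for every continuous w : [0,∞) → ℝ^m and every continuously differentiable curve x : [0,∞) → Z with x(0) = 0, x(t) ∈ X for all t ≥ 0, and x′(t) = A x(t) + B₂(Zc(P⁻¹x(t))) + B₁ w(t) for all t ≥ 0, if the output y(t) := C x(t) + D₂(Zc(P⁻¹x(t))) + D₁ w(t) is continuous in t, then ∫₀^∞ ‖y(t)‖² dt ≤ γ² ∫₀^∞ ‖w(t)‖²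 dt. -/

import Mathlib

open RealInnerProductSpace MeasureTheory Matrix

/-- Theorem 2: convex formulation of `H∞` state-feedback synthesis for
distributed-parameter systems. Under the operator inequality, closed-loop trajectories
of the distributed-parameter system satisfy the `L₂`-gain bound. -/
theorem hinf_synthesis_DPS
    {Z : Type*} [NormedAddCommGroup Z] [InnerProductSpace ℝ Z] [CompleteSpace Z]
    {U : Type*} [AddCommGroup U] [Module ℝ U]
    {m q : ℕ}
    (X : Submodule ℝ Z)
    (A : X →ₗ[ℝ] Z) (B₂ : U →ₗ[ℝ] Z) (Zc : X →ₗ[ℝ] U)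
    (B₁ : (Fin m → ℝ) →ₗ[ℝ] Z) (C : X →ₗ[ℝ] (Fin q → ℝ))
    (D₁ : Matrix (Fin q) (Fin m) ℝ) (D₂ : U →ₗ[ℝ] (Fin q → ℝ))
    (γ : ℝ) (hγ : 0 < γ)
    -- P bounded, self-adjoint, coercive, maps X into X with P(X) = X
    (P : Z →L[ℝ] Z)
    (hPsa : ∀ x y : Z, ⟪P x, y⟫ = ⟪x, P y⟫)
    (hPcoer : ∃ c > (0:ℝ), ∀ x : Z, c * ‖x‖ ^ 2 ≤ ⟪x, P x⟫)
    (hPX : ∀ x ∈ X, P x ∈ X)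
    (hPimg : P '' (X : Set Z) = (X : Set Z))
    -- (so that P is bijective with bounded inverse P⁻¹ mapping X into X)
    (Pinv : Z →L[ℝ] Z)
    (hPinv₁ : ∀ x : Z, P (Pinv x) = x) (hPinv₂ : ∀ x : Z, Pinv (P x) = x)
    (hPinvX : ∀ x ∈ X, Pinv x ∈ X)
    -- the operator inequality
    (ε : ℝ) (hε : 0 < ε)
    (hineq : ∀ (z : X) (w : Fin m → ℝ) (v : Fin q → ℝ),
      2 * ⟪(z : Z), A ⟨P z, hPX z z.2⟩⟫ + 2 * ⟪(z : Z), B₂ (Zc z)⟫ + 2 * ⟪(z : Z), B₁ w⟫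
        ≤ γ * (w ⬝ᵥ w)
          - 2 * (v ⬝ᵥ (C ⟨P z, hPX z z.2⟩ + D₂ (Zc z) + D₁.mulVec w))
          + γ * (v ⬝ᵥ v) - ε * ‖(z : Z)‖ ^ 2)
    -- closed-loop trajectory
    (w : ℝ → Fin m → ℝ) (hw : ContinuousOn w (Set.Ici (0:ℝ)))
    (x : ℝ → Z) (hx0 : x 0 = 0)
    (hxX : ∀ t : ℝ, 0 ≤ t → x t ∈ X)
    (hode : ∀ t (ht : 0 ≤ t),
      HasDerivAt x
        (A ⟨x t, hxX t ht⟩ + B₂ (Zc ⟨Pinv (x t), hPinvX _ (hxX t ht)⟩) + B₁ (w t)) t)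
    (y : ℝ → Fin q → ℝ)
    (hy : ∀ t (ht : 0 ≤ t),
      y t = C ⟨x t, hxX t ht⟩ + D₂ (Zc ⟨Pinv (x t), hPinvX _ (hxX t ht)⟩) + D₁.mulVec (w t))
    (hycont : ContinuousOn y (Set.Ici (0:ℝ))) :
    ∫⁻ t in Set.Ioi (0:ℝ), ENNReal.ofReal (∑ i, (y t i) ^ 2)
      ≤ ENNReal.ofReal (γ ^ 2) * ∫⁻ t in Set.Ioi (0:ℝ), ENNReal.ofReal (∑ i, (w t i) ^ 2) := by
  classical
  have hγ0 : γ ≠ 0 := ne_of_gt hγ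
  obtain ⟨c, hc, hcoer⟩ := hPcoer
  -- self-adjointness of Pinv
  have hPinvsa : ∀ a b : Z, ⟪Pinv a, b⟫ = ⟪a, Pinv b⟫ := by
    intro a b
    calc ⟪Pinv a, b⟫ = ⟪Pinv a, P (Pinv b)⟫ := by rw [hPinv₁]
      _ = ⟪P (Pinv a), Pinv b⟫ := (hPsa _ _).symm
      _ = ⟪a, Pinv b⟫ := by rw [hPinv₁]
  -- positivity of Pinv
  have hVpos : ∀ z : Z, (0:ℝ) ≤ ⟪z, Pinv z⟫ := by
    intro z
    have h1 := hcoer (Pinv z)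
    have h2 : ⟪Pinv z, P (Pinv z)⟫ = ⟪z, Pinv z⟫ := by
      rw [real_inner_comm, hPsa, hPinv₁]
      exact real_inner_comm _ _
    have h3 : (0:ℝ) ≤ c * ‖Pinv z‖ ^ 2 := mul_nonneg hc.le (sq_nonneg _)
    linarith [h1, h2.symm ▸ h1]
  set yy : ℝ → ℝ := fun t => ∑ i, (y t i) ^ 2 with hyydef
  set ww : ℝ → ℝ := fun t => ∑ i, (w t i) ^ 2 with hwwdef
  have hsumy : Continuous (fun v : Fin q → ℝ => ∑ i, v i ^ 2) := by
    exact continuous_finset_sum _ fun i _ => (continuous_apply i).pow 2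
  have hsumw : Continuous (fun v : Fin m → ℝ => ∑ i, v i ^ 2) := by
    exact continuous_finset_sum _ fun i _ => (continuous_apply i).pow 2
  have hyycont : ContinuousOn yy (Set.Ici (0:ℝ)) := hsumy.comp_continuousOn hycont
  have hwwcont : ContinuousOn ww (Set.Ici (0:ℝ)) := hsumw.comp_continuousOn hw
  have hyynn : ∀ t, 0 ≤ yy t := fun t => Finset.sum_nonneg fun i _ => sq_nonneg _
  have hwwnn : ∀ t, 0 ≤ ww t := fun t => Finset.sum_nonneg fun i _ => sq_nonneg _
  have hdot : ∀ {n : ℕ} (v : Fin n → ℝ), v ⬝ᵥ v = ∑ i, v i ^ 2 := by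
    intro n v; simp [dotProduct, sq]
  set f : ℝ → ℝ := fun s => γ⁻¹ * yy s - γ * ww s with hfdef
  have hfcont : ContinuousOn f (Set.Ici (0:ℝ)) :=
    (continuousOn_const.mul hyycont).sub (continuousOn_const.mul hwwcont)
  set V : ℝ → ℝ := fun t => ⟪x t, Pinv (x t)⟫ with hVdef
  -- the key differential dissipation inequality
  have key : ∀ t, 0 ≤ t → ∃ d : ℝ, HasDerivAt V d t ∧ d + f t ≤ 0 := by
    intro t ht
    set xd : Z := A ⟨x t, hxX t ht⟩ + B₂ (Zc ⟨Pinv (x t), hPinvX _ (hxX t ht)⟩) + B₁ (w t)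
      with hxd
    have hx' : HasDerivAt x xd t := hode t ht
    have hPx' : HasDerivAt (fun s => Pinv (x s)) (Pinv xd) t :=
      Pinv.hasFDerivAt.comp_hasDerivAt t hx'
    have hVd : HasDerivAt V (⟪x t, Pinv xd⟫ + ⟪xd, Pinv (x t)⟫) t :=
      HasDerivAt.inner ℝ hx' hPx'
    refine ⟨_, hVd, ?_⟩
    -- instantiate the operator inequality
    set z : X := ⟨Pinv (x t), hPinvX _ (hxX t ht)⟩ with hzdef
    have H := hineq z (w t) (γ⁻¹ • y t)
    have hPz : (⟨P (z : Z), hPX z z.2⟩ : X) = ⟨x t, hxX t ht⟩ :=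
      Subtype.ext (hPinv₁ (x t))
    rw [hPz, ← hy t ht] at H
    -- left side of H equals 2⟪Pinv (x t), xd⟫
    have hL : 2 * ⟪(z : Z), A ⟨x t, hxX t ht⟩⟫ + 2 * ⟪(z : Z), B₂ (Zc z)⟫
        + 2 * ⟪(z : Z), B₁ (w t)⟫ = 2 * ⟪Pinv (x t), xd⟫ := by
      rw [hxd]
      simp only [hzdef, inner_add_right]
      ring
    rw [hL] at H
    -- dot products
    have hsmul : ((γ⁻¹ • y t) ⬝ᵥ (γ⁻¹ • y t)) = γ⁻¹ * (γ⁻¹ * yy t) := by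
      rw [smul_dotProduct, dotProduct_smul, hdot, smul_eq_mul, smul_eq_mul]
    have hsmul2 : ((γ⁻¹ • y t) ⬝ᵥ y t) = γ⁻¹ * yy t := by
      rw [smul_dotProduct, hdot, smul_eq_mul]
    rw [hsmul, hsmul2, hdot] at H
    -- the derivative value
    have hderiv_eq : ⟪x t, Pinv xd⟫ + ⟪xd, Pinv (x t)⟫ = 2 * ⟪Pinv (x t), xd⟫ := by
      rw [← hPinvsa (x t) xd, real_inner_comm xd (Pinv (x t))]
      ring
    rw [hderiv_eq]
    have hgg : γ * (γ⁻¹ * (γ⁻¹ * yy t)) = γ⁻¹ * yy t := by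
      rw [← mul_assoc, mul_inv_cancel₀ hγ0, one_mul]
    have hnorm : 0 ≤ ε * ‖(z : Z)‖ ^ 2 := mul_nonneg hε.le (sq_nonneg _)
    simp only [hfdef]
    nlinarith [H, hgg, hnorm]
  -- integrated inequality on [0, T]
  have main : ∀ T : ℝ, 0 ≤ T →
      (∫ s in (0:ℝ)..T, yy s) ≤ γ ^ 2 * ∫ s in (0:ℝ)..T, ww s := by
    intro T hT
    rcases eq_or_lt_of_le hT with rfl | hT'
    · simp
    set g : ℝ → ℝ := fun t => V t + ∫ s in (0:ℝ)..t, f s with hgdef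
    have hIccIci : Set.Icc (0:ℝ) T ⊆ Set.Ici 0 := fun s hs => hs.1
    have hfIccInt : IntegrableOn f (Set.uIcc (0:ℝ) T) := by
      rw [Set.uIcc_of_le hT]
      exact (hfcont.mono hIccIci).integrableOn_compact isCompact_Icc
    have hgcont : ContinuousOn g (Set.Icc 0 T) := by
      apply ContinuousOn.add
      · intro s hs
        obtain ⟨d, hd, _⟩ := key s hs.1
        exact hd.continuousAt.continuousWithinAt
      · have := intervalIntegral.continuousOn_primitive_interval hfIccInt
        rwa [Set.uIcc_of_le hT] at this
    have hderivg : ∀ s ∈ Set.Ioo (0:ℝ) T, ∃ d ≤ 0, HasDerivAt g d s := by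
      intro s hs
      obtain ⟨d, hVd, hdle⟩ := key s hs.1.le
      have hint : IntervalIntegrable f volume 0 s := by
        apply ContinuousOn.intervalIntegrable
        rw [Set.uIcc_of_le hs.1.le]
        exact hfcont.mono fun u hu => hu.1
      have hmeas : StronglyMeasurableAtFilter f (nhds s) volume :=
        (hfcont.mono Set.Ioi_subset_Ici_self).stronglyMeasurableAtFilter isOpen_Ioi s hs.1
      have hca : ContinuousAt f s :=
        hfcont.continuousAt (Ici_mem_nhds hs.1)
      have hF' : HasDerivAt (fun u => ∫ v in (0:ℝ)..u, f v) (f s) s :=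
        intervalIntegral.integral_hasDerivAt_right hint hmeas hca
      exact ⟨d + f s, hdle, hVd.add hF'⟩
    have hanti : AntitoneOn g (Set.Icc 0 T) := by
      apply antitoneOn_of_deriv_nonpos (convex_Icc 0 T) hgcont
      · intro s hs
        rw [interior_Icc] at hs
        obtain ⟨d, _, hd⟩ := hderivg s hs
        exact hd.differentiableAt.differentiableWithinAt
      · intro s hs
        rw [interior_Icc] at hs
        obtain ⟨d, hdle, hd⟩ := hderivg s hs
        rw [hd.deriv]
        exact hdle
    have hgT : g T ≤ g 0 :=
      hanti (Set.left_mem_Icc.mpr hT) (Set.right_mem_Icc.mpr hT) hT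
    have hg0 : g 0 = 0 := by
      simp [hgdef, hVdef, hx0]
    have hVT : 0 ≤ V T := hVpos (x T)
    have hFT : (∫ s in (0:ℝ)..T, f s) ≤ 0 := by
      have h := hgT
      rw [hg0] at h
      simp only [hgdef] at h
      linarith
    have hyyint : IntervalIntegrable yy volume 0 T := by
      apply ContinuousOn.intervalIntegrable
      rw [Set.uIcc_of_le hT]; exact hyycont.mono hIccIci
    have hwwint : IntervalIntegrable ww volume 0 T := by
      apply ContinuousOn.intervalIntegrable
      rw [Set.uIcc_of_le hT]; exact hwwcont.mono hIccIci
    have hsplit : (∫ s in (0:ℝ)..T, f s)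
        = γ⁻¹ * (∫ s in (0:ℝ)..T, yy s) - γ * ∫ s in (0:ℝ)..T, ww s := by
      rw [hfdef]
      rw [intervalIntegral.integral_sub (hyyint.const_mul _) (hwwint.const_mul _),
        intervalIntegral.integral_const_mul, intervalIntegral.integral_const_mul]
    rw [hsplit] at hFT
    have hIy : γ⁻¹ * (∫ s in (0:ℝ)..T, yy s) ≤ γ * ∫ s in (0:ℝ)..T, ww s := by linarith
    have := mul_le_mul_of_nonneg_left hIy hγ.le
    calc (∫ s in (0:ℝ)..T, yy s) = γ * (γ⁻¹ * ∫ s in (0:ℝ)..T, yy s) := by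
          field_simp
      _ ≤ γ * (γ * ∫ s in (0:ℝ)..T, ww s) := this
      _ = γ ^ 2 * ∫ s in (0:ℝ)..T, ww s := by ring
  -- decompose Ioi 0 into a disjoint union of Ioc n (n+1)
  have hset : Set.Ioi (0:ℝ) = ⋃ n : ℕ, Set.Ioc (n:ℝ) (n+1) := by
    ext t
    simp only [Set.mem_Ioi, Set.mem_iUnion, Set.mem_Ioc]
    constructor
    · intro ht
      have h1 : 1 ≤ ⌈t⌉₊ := Nat.one_le_ceil_iff.mpr ht
      refine ⟨⌈t⌉₊ - 1, ?_, ?_⟩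
      · have hlt : (⌈t⌉₊ : ℝ) < t + 1 := Nat.ceil_lt_add_one ht.le
        have : ((⌈t⌉₊ - 1 : ℕ) : ℝ) = (⌈t⌉₊ : ℝ) - 1 := by
          push_cast [Nat.cast_sub h1]; ring
        rw [this]; linarith
      · have hle : t ≤ (⌈t⌉₊ : ℝ) := Nat.le_ceil t
        have : ((⌈t⌉₊ - 1 : ℕ) : ℝ) + 1 = (⌈t⌉₊ : ℝ) := by
          push_cast [Nat.cast_sub h1]; ring
        rw [this]; exact hle
    · rintro ⟨n, hn, -⟩
      exact lt_of_le_of_lt (Nat.cast_nonneg n) hn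
  have hdisj : Pairwise (Function.onFun Disjoint fun n : ℕ => Set.Ioc (n:ℝ) (n+1)) := by
    intro a b hab
    simp only [Function.onFun]
    rw [Set.Ioc_disjoint_Ioc]
    rcases hab.lt_or_gt with h | h
    · have : (a:ℝ) + 1 ≤ b := by exact_mod_cast Nat.succ_le_of_lt h
      exact le_trans (min_le_left _ _) (le_trans this (le_max_right _ _))
    · have : (b:ℝ) + 1 ≤ a := by exact_mod_cast Nat.succ_le_of_lt h
      exact le_trans (min_le_right _ _) (le_trans this (le_max_left _ _))
  conv_lhs => rw [hset]
  rw [lintegral_iUnion (fun n => measurableSet_Ioc) hdisj]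
  rw [ENNReal.tsum_eq_iSup_nat]
  refine iSup_le fun N => ?_
  have hpart : ∑ n ∈ Finset.range N, ∫⁻ t in Set.Ioc (n:ℝ) (n+1), ENNReal.ofReal (yy t)
      = ∫⁻ t in Set.Ioc (0:ℝ) (N:ℝ), ENNReal.ofReal (yy t) := by
    induction N with
    | zero => simp
    | succ k ih =>
      rw [Finset.sum_range_succ, ih,
        ← lintegral_union measurableSet_Ioc (Set.Ioc_disjoint_Ioc_of_le le_rfl),
        Set.Ioc_union_Ioc_eq_Ioc (Nat.cast_nonneg k) (by linarith [Nat.cast_nonneg (α := ℝ) k])]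
      push_cast
      ring_nf
  rw [hpart]
  have hN0 : (0:ℝ) ≤ (N:ℝ) := Nat.cast_nonneg N
  have hyyI : IntegrableOn yy (Set.Ioc (0:ℝ) (N:ℝ)) := by
    apply IntegrableOn.mono_set _ Set.Ioc_subset_Icc_self
    exact (hyycont.mono fun s hs => hs.1).integrableOn_compact isCompact_Icc
  have hwwI : IntegrableOn ww (Set.Ioc (0:ℝ) (N:ℝ)) := by
    apply IntegrableOn.mono_set _ Set.Ioc_subset_Icc_self
    exact (hwwcont.mono fun s hs => hs.1).integrableOn_compact isCompact_Icc
  have h1 : ∫⁻ t in Set.Ioc (0:ℝ) (N:ℝ), ENNReal.ofReal (yy t)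
      = ENNReal.ofReal (∫ t in Set.Ioc (0:ℝ) (N:ℝ), yy t) :=
    (ofReal_integral_eq_lintegral_ofReal hyyI
      (Filter.Eventually.of_forall fun t => hyynn t)).symm
  have h2 : ENNReal.ofReal (∫ t in Set.Ioc (0:ℝ) (N:ℝ), ww t)
      = ∫⁻ t in Set.Ioc (0:ℝ) (N:ℝ), ENNReal.ofReal (ww t) :=
    ofReal_integral_eq_lintegral_ofReal hwwI
      (Filter.Eventually.of_forall fun t => hwwnn t)
  have hmain := main (N:ℝ) hN0
  rw [intervalIntegral.integral_of_le hN0, intervalIntegral.integral_of_le hN0] at hmain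
  calc ∫⁻ t in Set.Ioc (0:ℝ) (N:ℝ), ENNReal.ofReal (yy t)
      = ENNReal.ofReal (∫ t in Set.Ioc (0:ℝ) (N:ℝ), yy t) := h1
    _ ≤ ENNReal.ofReal (γ ^ 2 * ∫ t in Set.Ioc (0:ℝ) (N:ℝ), ww t) :=
        ENNReal.ofReal_le_ofReal hmain
    _ = ENNReal.ofReal (γ ^ 2) * ENNReal.ofReal (∫ t in Set.Ioc (0:ℝ) (N:ℝ), ww t) :=
        ENNReal.ofReal_mul (sq_nonneg γ)
    _ = ENNReal.ofReal (γ ^ 2) * ∫⁻ t in Set.Ioc (0:ℝ) (N:ℝ), ENNReal.ofReal (ww t) := by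
        rw [h2]
    _ ≤ ENNReal.ofReal (γ ^ 2) * ∫⁻ t in Set.Ioi (0:ℝ), ENNReal.ofReal (ww t) :=
        mul_le_mul_right (lintegral_mono_set Set.Ioc_subset_Ioi_self) _
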